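/- arXiv:2301.12736 — 2 statements merged into one kernel-verified Lean document; each statement's English description precedes it below -/
import Mathlib

section
/- Let Y = {0,1} and L₂ : P₂(Y) × Y → ℝ a loss. Suppose there exist Q, Q̃ ∈ P₂(Y) such that Q̃ lies on a segment from some Q' to Q, min(L₂(Q̃,1) − L₂(Q,1), L₂(Q,0) − L₂(Q̃,0)) > 0, and 0 < E_{p∼Q}[p(1)] < (1 + (L₂(Q̃,1) − L₂(Q,1))/(L₂(Q,0) − L₂(Q̃,0)))⁻¹. Then S₂(Q̃, Q) < S₂(Q, Q), so the induced scoring rule S₂ is not proper. -/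
open MeasureTheory

noncomputable instance {α : Type*} [MeasurableSpace α] : MeasurableSpace (ProbabilityMeasure α) :=
  Subtype.instMeasurableSpace

noncomputable def S2 {Y : Type*} [MeasurableSpace Y]
    (L2 : ProbabilityMeasure (ProbabilityMeasure Y) → Y → ℝ)
    (Qhat Q : ProbabilityMeasure (ProbabilityMeasure Y)) : ℝ :=
  ∫ p : ProbabilityMeasure Y, (∫ y, L2 Qhat y ∂(p : Measure Y))
    ∂(Q : Measure (ProbabilityMeasure Y))

noncomputable def mix {α : Type*} [MeasurableSpace α] (l : ℝ) (Q Q' : ProbabilityMeasure α) :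
    ProbabilityMeasure α :=
  ⟨(ENNReal.ofReal l ⊓ 1) • (Q : Measure α) + (1 - (ENNReal.ofReal l ⊓ 1)) • (Q' : Measure α), by
    constructor
    have h1 : (ENNReal.ofReal l ⊓ 1) ≤ 1 := inf_le_right
    simp [Measure.add_apply, Measure.smul_apply, smul_eq_mul, add_tsub_cancel_of_le h1]⟩

def Proper {Y : Type*} [MeasurableSpace Y]
    (L2 : ProbabilityMeasure (ProbabilityMeasure Y) → Y → ℝ) : Prop :=
  ∀ Qhat Q : ProbabilityMeasure (ProbabilityMeasure Y), S2 L2 Q Q ≤ S2 L2 Qhat Q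

/-- $E_{p\sim Q}[p(1)]$ for second-order distributions over $\mathcal Y = \{0,1\}$. -/
noncomputable def expProb1 (Q : ProbabilityMeasure (ProbabilityMeasure (Fin 2))) : ℝ :=
  ∫ p : ProbabilityMeasure (Fin 2), ((p : Measure (Fin 2)) {1}).toReal
    ∂(Q : Measure (ProbabilityMeasure (Fin 2)))

/-- if $\tilde Q$ lies on a segment toward $Q$, the losses separate with
the right signs, and $0 < E_{p\sim Q}[p(1)]$ is small enough, then
$S_2(\tilde Q, Q) < S_2(Q,Q)$ and the induced scoring rule is not proper. -/
theorem not_proper_of_small_expected_prob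
    (L2 : ProbabilityMeasure (ProbabilityMeasure (Fin 2)) → Fin 2 → ℝ)
    (Q Qt : ProbabilityMeasure (ProbabilityMeasure (Fin 2)))
    (hSeg : ∃ l : ℝ, 0 ≤ l ∧ l ≤ 1 ∧
      ∃ Q' : ProbabilityMeasure (ProbabilityMeasure (Fin 2)), Qt = mix l Q Q')
    (hMin : 0 < min (L2 Qt 1 - L2 Q 1) (L2 Q 0 - L2 Qt 0))
    (hPos : 0 < expProb1 Q)
    (hSmall : expProb1 Q < (1 + (L2 Qt 1 - L2 Q 1) / (L2 Q 0 - L2 Qt 0))⁻¹) :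
    S2 L2 Qt Q < S2 L2 Q Q ∧ ¬ Proper L2 := by

  classical
  have ha : 0 < L2 Qt 1 - L2 Q 1 := lt_of_lt_of_le hMin (min_le_left _ _)
  have hb : 0 < L2 Q 0 - L2 Qt 0 := lt_of_lt_of_le hMin (min_le_right _ _)
  set a := L2 Qt 1 - L2 Q 1 with ha_def
  set b := L2 Q 0 - L2 Qt 0 with hb_def
  set m := expProb1 Q with hm_def
  -- measurability of p ↦ (p {1}).toReal
  have hmeas : Measurable fun p : ProbabilityMeasure (Fin 2) =>
      ((p : Measure (Fin 2)) {1}).toReal := by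
    apply Measurable.ennreal_toReal
    exact (Measure.measurable_coe (measurableSet_singleton 1)).comp measurable_subtype_coe
  -- integrability
  have hint : Integrable (fun p : ProbabilityMeasure (Fin 2) =>
      ((p : Measure (Fin 2)) {1}).toReal) (Q : Measure (ProbabilityMeasure (Fin 2))) := by
    refine Integrable.mono' (integrable_const (1 : ℝ)) hmeas.aestronglyMeasurable ?_
    filter_upwards with p
    rw [Real.norm_eq_abs, abs_of_nonneg ENNReal.toReal_nonneg]
    have h1 : (p : Measure (Fin 2)) {1} ≤ 1 := prob_le_one
    simpa using ENNReal.toReal_mono ENNReal.one_ne_top h1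
  -- the key computation
  have key : ∀ Qhat : ProbabilityMeasure (ProbabilityMeasure (Fin 2)),
      S2 L2 Qhat Q = L2 Qhat 0 * (1 - m) + L2 Qhat 1 * m := by
    intro Qhat
    have hinner : ∀ p : ProbabilityMeasure (Fin 2),
        (∫ y, L2 Qhat y ∂(p : Measure (Fin 2))) =
          L2 Qhat 0 * (1 - ((p : Measure (Fin 2)) {1}).toReal)
            + L2 Qhat 1 * ((p : Measure (Fin 2)) {1}).toReal := by
      intro p
      have hsum : (p : Measure (Fin 2)) {0} + (p : Measure (Fin 2)) {1} = 1 := by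
        rw [← measure_union (by simp) (measurableSet_singleton 1)]
        have huniv : ({0} ∪ {1} : Set (Fin 2)) = Set.univ := by
          ext x; fin_cases x <;> simp
        rw [huniv, measure_univ]
      have h0 : ((p : Measure (Fin 2)) {0}).toReal
          = 1 - ((p : Measure (Fin 2)) {1}).toReal := by
        have hne0 : (p : Measure (Fin 2)) {0} ≠ ⊤ := measure_ne_top _ _
        have hne1 : (p : Measure (Fin 2)) {1} ≠ ⊤ := measure_ne_top _ _
        have := congrArg ENNReal.toReal hsum
        rw [ENNReal.toReal_add hne0 hne1] at this
        simp at this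
        linarith
      rw [integral_fintype (hf := Integrable.of_finite)]
      simp [Measure.real, Fin.sum_univ_two, h0, smul_eq_mul]
      ring
    rw [S2]
    simp_rw [hinner]
    rw [integral_add]
    · rw [integral_const_mul, integral_const_mul, integral_sub (integrable_const 1) hint,
        integral_const]
      simp [hm_def, expProb1]
    · exact (Integrable.sub (integrable_const 1) hint).const_mul _
    · exact hint.const_mul _
  -- numeric inequality
  have hab : m * (a + b) < b := by
    have hinv : (1 + a / b)⁻¹ = b / (a + b) := by
      rw [show (1 : ℝ) + a / b = (a + b) / b by field_simp; ring]
      rw [inv_div]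
    rw [hinv] at hSmall
    exact (lt_div_iff₀ (by linarith)).mp hSmall
  have hlt : S2 L2 Qt Q < S2 L2 Q Q := by
    rw [key Qt, key Q]
    nlinarith [hab]
  exact ⟨hlt, fun hp => absurd (hp Qt Q) (not_le.mpr hlt)⟩
end

section
/- Let Y = ℝ and let L₂ : P₂(ℝ) × ℝ → ℝ be a loss. Suppose p_l, p_r ∈ P₁(ℝ) and Q, Q̃ ∈ P₂(ℝ) with Q̃ = δ_{p_l} and Q = (1−λ*)δ_{p_l} + λ*·δ_{p_r}, where E_{Y∼p_l}[L₂(Q,Y) − L₂(Q̃,Y)] > 0, E_{Y∼p_r}[L₂(Q̃,Y) − L₂(Q,Y)] > 0, and 0 < λ* < (1 + E_{Y∼p_r}[L₂(Q̃,Y) − L₂(Q,Y)] / E_{Y∼p_l}[L₂(Q,Y) − L₂(Q̃,Y)])⁻¹. Then S₂(Q̃, Q) < S₂(Q, Q), so the induced scoring rule is not proper. -/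
open MeasureTheory

/-- The second-order Dirac measure $\delta_p$ at a first-order distribution $p$. -/
noncomputable def dirac2 (p : ProbabilityMeasure ℝ) :
    ProbabilityMeasure (ProbabilityMeasure ℝ) :=
  ⟨Measure.dirac p, inferInstance⟩

lemma iic_iInf_rat (μ : Measure ℝ) [IsFiniteMeasure μ] (a : ℝ) :
    μ (Set.Iic a) = ⨅ q : {q : ℚ // a < (q : ℝ)}, μ (Set.Iic ((q : ℚ) : ℝ)) := by
  have hset : (⋂ q : {q : ℚ // a < (q : ℝ)}, Set.Iic (((q : ℚ) : ℝ))) = Set.Iic a := by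
    ext x
    simp only [Set.mem_iInter, Set.mem_Iic]
    constructor
    · intro h
      by_contra hx
      push_neg at hx
      obtain ⟨q, hq1, hq2⟩ := exists_rat_btwn hx
      exact absurd (h ⟨q, hq1⟩) (not_le.2 hq2)
    · intro h q
      exact h.trans (le_of_lt q.2)
  rw [← hset]
  refine Directed.measure_iInter (fun q => measurableSet_Iic.nullMeasurableSet) ?_ ?_
  · intro q1 q2
    refine ⟨⟨min (q1 : ℚ) (q2 : ℚ), by push_cast; exact lt_min q1.2 q2.2⟩,
      Set.Iic_subset_Iic.2 (by push_cast; exact min_le_left _ _),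
      Set.Iic_subset_Iic.2 (by push_cast; exact min_le_right _ _)⟩
  · obtain ⟨q, hq⟩ := exists_rat_gt a
    exact ⟨⟨q, hq⟩, measure_ne_top μ _⟩

instance : MeasurableSingletonClass (ProbabilityMeasure ℝ) := by
  constructor
  intro μ
  have hset : {μ} = ⋂ q : ℚ, {ν : ProbabilityMeasure ℝ |
      (ν : Measure ℝ) (Set.Iic ((q : ℚ) : ℝ)) = (μ : Measure ℝ) (Set.Iic ((q : ℚ) : ℝ))} := by
    ext ν
    simp only [Set.mem_singleton_iff, Set.mem_iInter, Set.mem_setOf_eq]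
    constructor
    · rintro rfl q; rfl
    · intro h
      apply Subtype.ext
      apply Measure.ext_of_Iic (ν : Measure ℝ) (μ : Measure ℝ)
      intro a
      rw [iic_iInf_rat, iic_iInf_rat]
      exact iInf_congr (fun q => h q.1)
  rw [hset]
  refine MeasurableSet.iInter (fun q => ?_)
  exact ((Measure.measurable_coe measurableSet_Iic).comp measurable_subtype_coe)
    (measurableSet_singleton _)

lemma integrable_dirac' {α E : Type*} [MeasurableSpace α] [MeasurableSingletonClass α]
    [NormedAddCommGroup E] (f : α → E) (a : α) : Integrable f (Measure.dirac a) := by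
  refine (integrable_const (f a)).congr ?_
  rw [ae_dirac_eq]
  exact Filter.eventually_pure.2 rfl

/-- regression: for $\tilde Q = \delta_{p_l}$ and
$Q = (1-\lambda^*)\delta_{p_l} + \lambda^*\delta_{p_r}$ with the stated sign conditions
and $\lambda^*$ small enough, $S_2(\tilde Q, Q) < S_2(Q, Q)$, so the induced scoring
rule is not proper. -/
theorem not_proper_of_regression_mixture
    (L2 : ProbabilityMeasure (ProbabilityMeasure ℝ) → ℝ → ℝ)
    (pl pr : ProbabilityMeasure ℝ) (lam : ℝ)
    (Q Qt : ProbabilityMeasure (ProbabilityMeasure ℝ))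
    (hQt : Qt = dirac2 pl)
    (hQ : Q = mix lam (dirac2 pr) (dirac2 pl))
    (hIntl : ∀ Qhat : ProbabilityMeasure (ProbabilityMeasure ℝ),
      Integrable (fun y => L2 Qhat y) (pl : Measure ℝ))
    (hIntr : ∀ Qhat : ProbabilityMeasure (ProbabilityMeasure ℝ),
      Integrable (fun y => L2 Qhat y) (pr : Measure ℝ))
    (hl : 0 < ∫ y, (L2 Q y - L2 Qt y) ∂(pl : Measure ℝ))
    (hr : 0 < ∫ y, (L2 Qt y - L2 Q y) ∂(pr : Measure ℝ))
    (hlam0 : 0 < lam)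
    (hlam1 : lam < (1 + (∫ y, (L2 Qt y - L2 Q y) ∂(pr : Measure ℝ)) /
                        (∫ y, (L2 Q y - L2 Qt y) ∂(pl : Measure ℝ)))⁻¹) :
    S2 L2 Qt Q < S2 L2 Q Q ∧ ¬ Proper L2 := by
  set Il := ∫ y, (L2 Q y - L2 Qt y) ∂(pl : Measure ℝ) with hIl
  set Ir := ∫ y, (L2 Qt y - L2 Q y) ∂(pr : Measure ℝ) with hIr
  -- lam < 1
  have hratio : (0:ℝ) < Ir / Il := div_pos hr hl
  have hlam1' : lam < 1 := lt_of_lt_of_le hlam1 (by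
    rw [inv_le_one_iff₀]; right; linarith)
  -- the mixing coefficient
  have hc : ENNReal.ofReal lam ⊓ 1 = ENNReal.ofReal lam := by
    refine inf_eq_left.2 ?_
    rw [← ENNReal.ofReal_one]
    exact ENNReal.ofReal_le_ofReal hlam1'.le
  have hd : (1 : ENNReal) - ENNReal.ofReal lam = ENNReal.ofReal (1 - lam) := by
    rw [← ENNReal.ofReal_one, ← ENNReal.ofReal_sub _ hlam0.le]
  -- computing S2 against the mixture
  have hS2 : ∀ Qhat : ProbabilityMeasure (ProbabilityMeasure ℝ),
      S2 L2 Qhat Q = lam * (∫ y, L2 Qhat y ∂(pr : Measure ℝ))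
        + (1 - lam) * (∫ y, L2 Qhat y ∂(pl : Measure ℝ)) := by
    intro Qhat
    have hmeas : (Q : Measure (ProbabilityMeasure ℝ))
        = ENNReal.ofReal lam • Measure.dirac pr
          + ENNReal.ofReal (1 - lam) • Measure.dirac pl := by
      rw [hQ]
      show (ENNReal.ofReal lam ⊓ 1) • (Measure.dirac pr)
          + (1 - (ENNReal.ofReal lam ⊓ 1)) • (Measure.dirac pl) = _
      rw [hc, hd]
    unfold S2
    rw [hmeas,
      integral_add_measure
        ((_root_.integrable_dirac' _ pr).smul_measure ENNReal.ofReal_ne_top)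
        ((_root_.integrable_dirac' _ pl).smul_measure ENNReal.ofReal_ne_top),
      integral_smul_measure, integral_smul_measure, integral_dirac, integral_dirac,
      ENNReal.toReal_ofReal hlam0.le, ENNReal.toReal_ofReal (by linarith)]
    simp [smul_eq_mul]
  -- rewrite the difference integrals
  have hIl' : Il = (∫ y, L2 Q y ∂(pl : Measure ℝ)) - ∫ y, L2 Qt y ∂(pl : Measure ℝ) := by
    rw [hIl, integral_sub (hIntl Q) (hIntl Qt)]
  have hIr' : Ir = (∫ y, L2 Qt y ∂(pr : Measure ℝ)) - ∫ y, L2 Q y ∂(pr : Measure ℝ) := by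
    rw [hIr, integral_sub (hIntr Qt) (hIntr Q)]
  -- the key smallness inequality
  have key : lam * (Il + Ir) < Il := by
    have h1 : (1 + Ir / Il) = (Il + Ir) / Il := by field_simp
    have h2 : lam < Il / (Il + Ir) := by
      rw [h1, inv_div] at hlam1; exact hlam1
    exact (lt_div_iff₀ (by linarith)).mp h2
  have hmain : S2 L2 Qt Q < S2 L2 Q Q := by
    rw [hS2 Qt, hS2 Q]
    nlinarith [key, hIl', hIr']
  exact ⟨hmain, fun hp => absurd (hp Qt Q) (not_le.2 hmain)⟩
end
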